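/- Let X and Z be Banach spaces, 1 < p ≤ ∞, and Y = X ⊕_p Z, so that the dual norm satisfies ‖(x*,z*)‖ = (‖x*‖^q + ‖z*‖^q)^{1/q} where 1/p + 1/q = 1. Let π : B_{Y*} → B_{X*} be the restriction map. If (xₙ*) is a sequence in B_{X*} weak* converging to x₀* with ‖xₙ*‖ → ‖x₀*‖, then for every y₀* = (x₀*, z₀*) ∈ π⁻¹(x₀*) there exist yₙ* ∈ π⁻¹(xₙ*) with yₙ* → y₀* weak*. -/

import Mathlib

open Filter Topology NormedSpace

/-- For Banach spaces `X`, `Z` and the ℓᵖ-sum `Y = X ⊕_p Z` with `1 < p ≤ ∞`,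
whose dual is `X* ⊕_q Z*` with norm `(‖x*‖^q + ‖z*‖^q)^(1/q)` for the conjugate exponent
`q` (so `1 ≤ q < ∞`), the restriction map `π : B_{Y*} → B_{X*}` has the property: if a
sequence `(xₙ*)` in `B_{X*}` weak* converges to `x₀*` with `‖xₙ*‖ → ‖x₀*‖`, then for every
`(x₀*, z₀*)` in the fiber over `x₀*` there are lifts `(xₙ*, zₙ*)` in the fibers over the
`xₙ*` converging weak* to `(x₀*, z₀*)`. -/
theorem ellp_sum_fiber_convergent_of_norm_convergent
    (X Z : Type*) [NormedAddCommGroup X] [NormedSpace ℝ X] [CompleteSpace X]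
    [NormedAddCommGroup Z] [NormedSpace ℝ Z] [CompleteSpace Z]
    (q : ℝ) (hq : 1 ≤ q)
    (x : ℕ → StrongDual ℝ X) (x₀ : StrongDual ℝ X)
    (hball : ∀ n, ‖x n‖ ≤ 1)
    (hw : Tendsto (fun n => StrongDual.toWeakDual (x n)) atTop (𝓝 (StrongDual.toWeakDual x₀)))
    (hnorm : Tendsto (fun n => ‖x n‖) atTop (𝓝 ‖x₀‖))
    (z₀ : StrongDual ℝ Z) (hfiber : (‖x₀‖ ^ q + ‖z₀‖ ^ q) ^ (1 / q) ≤ 1) :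
    ∃ z : ℕ → StrongDual ℝ Z,
      (∀ n, (‖x n‖ ^ q + ‖z n‖ ^ q) ^ (1 / q) ≤ 1) ∧
      Tendsto (fun n => (StrongDual.toWeakDual (x n), StrongDual.toWeakDual (z n))) atTop
        (𝓝 (StrongDual.toWeakDual x₀, StrongDual.toWeakDual z₀)) := by
  have hq0 : (0 : ℝ) < q := lt_of_lt_of_le one_pos hq
  set a : ℝ := ‖z₀‖ ^ q with ha
  have ha0 : 0 ≤ a := Real.rpow_nonneg (norm_nonneg _) q
  set c : ℕ → ℝ := fun n => min 1 (((1 - ‖x n‖ ^ q) / a) ^ (1 / q)) with hc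
  have hxq : ∀ n, ‖x n‖ ^ q ≤ 1 := fun n =>
    Real.rpow_le_one (norm_nonneg _) (hball n) hq0.le
  have hd0 : ∀ n, 0 ≤ (1 - ‖x n‖ ^ q) / a := fun n =>
    div_nonneg (by linarith [hxq n]) ha0
  have hc0 : ∀ n, 0 ≤ c n := fun n =>
    le_min zero_le_one (Real.rpow_nonneg (hd0 n) _)
  -- the fiber inequality in additive form
  have hfiber' : ‖x₀‖ ^ q + a ≤ 1 := by
    have h1 : (0 : ℝ) ≤ ‖x₀‖ ^ q + a := by positivity
    have h2 := Real.rpow_le_rpow (Real.rpow_nonneg h1 _) hfiber hq0.le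
    rwa [Real.one_rpow, one_div, Real.rpow_inv_rpow h1 (ne_of_gt hq0)] at h2
  refine ⟨fun n => c n • z₀, ?_, ?_⟩
  · intro n
    have hzn : ‖c n • z₀‖ ^ q ≤ 1 - ‖x n‖ ^ q := by
      have h1 : ‖c n • z₀‖ = c n * ‖z₀‖ := by
        rw [norm_smul, Real.norm_eq_abs, abs_of_nonneg (hc0 n)]
      rw [h1, Real.mul_rpow (hc0 n) (norm_nonneg _), ← ha]
      have h2 : c n ^ q ≤ (1 - ‖x n‖ ^ q) / a := by
        calc c n ^ q ≤ (((1 - ‖x n‖ ^ q) / a) ^ (1 / q)) ^ q :=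
              Real.rpow_le_rpow (hc0 n) (min_le_right _ _) hq0.le
          _ = (1 - ‖x n‖ ^ q) / a := by
              rw [one_div, Real.rpow_inv_rpow (hd0 n) (ne_of_gt hq0)]
      calc c n ^ q * a ≤ (1 - ‖x n‖ ^ q) / a * a :=
            mul_le_mul_of_nonneg_right h2 ha0
        _ ≤ 1 - ‖x n‖ ^ q := by
            rcases eq_or_ne a 0 with h | h
            · simp [h]; linarith [hxq n]
            · rw [div_mul_cancel₀ _ h]
    have hsum : ‖x n‖ ^ q + ‖c n • z₀‖ ^ q ≤ 1 := by linarith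
    exact Real.rpow_le_one (by positivity) hsum (by positivity)
  · -- convergence
    have hz : Tendsto (fun n => c n • z₀) atTop (𝓝 z₀) := by
      rcases eq_or_ne z₀ 0 with h | h
      · simp [h]
      · have ha' : 0 < a := Real.rpow_pos_of_pos (norm_pos_iff.mpr h) q
        have htd : Tendsto (fun n => ((1 - ‖x n‖ ^ q) / a) ^ (1 / q)) atTop
            (𝓝 (((1 - ‖x₀‖ ^ q) / a) ^ (1 / q))) := by
          refine Tendsto.rpow_const ?_ (Or.inr (by positivity))
          exact ((hnorm.rpow_const (Or.inr hq0.le)).const_sub 1).div_const a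
        have hone : (1 : ℝ) ≤ ((1 - ‖x₀‖ ^ q) / a) ^ (1 / q) := by
          refine Real.one_le_rpow ?_ (by positivity)
          rw [le_div_iff₀ ha', one_mul]
          linarith
        have htc : Tendsto c atTop (𝓝 1) := by
          have := tendsto_const_nhds.min htd (f := fun _ : ℕ => (1 : ℝ))
          rwa [min_eq_left hone] at this
        have := htc.smul_const z₀
        rwa [one_smul] at this
    exact hw.prodMk_nhds ((Dual.toWeakDual_continuous.tendsto z₀).comp hz)
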